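/- Let V be a finite-dimensional real vector space of dimension n ≥ 3 equipped with a nondegenerate symmetric bilinear form g. Suppose vectors (covectors) α, β, γ, δ and a covector v with g-squared-norm v² = g⁻¹(v,v) ≠ 0 satisfy α_j g_{kl} + β_k g_{lj} + γ_l g_{jk} + δ_j v_k v_l = 0 for all indices (i.e., as a trilinear tensor identity). Then α = β = γ = δ = 0. -/
import Mathlib


set_option maxHeartbeats 1000000 in
/-- On an `n`-dimensional real vector space (`n ≥ 3`) with a nondegenerate
symmetric bilinear form `g` (with inverse `ginv`), if covectors `α β γ δ` and a covector `v`
with `g⁻¹(v,v) ≠ 0` satisfy `α_j g_{kl} + β_k g_{lj} + γ_l g_{jk} + δ_j v_k v_l = 0`,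
then `α = β = γ = δ = 0`. -/
theorem stmt0 (n : ℕ) (hn : 3 ≤ n)
    (g ginv : Fin n → Fin n → ℝ)
    (hgsym : ∀ i j, g i j = g j i)
    (hinv : ∀ i j, ∑ k, g i k * ginv k j = if i = j then (1:ℝ) else 0)
    (α β γ δ v : Fin n → ℝ)
    (hv : (∑ j, ∑ k, ginv j k * v j * v k) ≠ 0)
    (heq : ∀ j k l, α j * g k l + β k * g l j + γ l * g j k + δ j * v k * v l = 0) :
    α = 0 ∧ β = 0 ∧ γ = 0 ∧ δ = 0 := by
  -- Matrix preliminaries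
  set G : Matrix (Fin n) (Fin n) ℝ := Matrix.of g with hGdef
  set Gi : Matrix (Fin n) (Fin n) ℝ := Matrix.of ginv with hGidef
  have hGG : G * Gi = 1 := by
    ext i j
    simp [Matrix.mul_apply, Matrix.one_apply, hGdef, hGidef, hinv i j]
  have hGiG : Gi * G = 1 := mul_eq_one_comm.mp hGG
  have hGmul : ∀ k j, (∑ l, ginv k l * g l j) = if k = j then (1:ℝ) else 0 := by
    intro k j
    have h := congrFun (congrFun hGiG k) j
    simpa [Matrix.mul_apply, Matrix.one_apply, hGdef, hGidef] using h
  have hGt : G.transpose = G := by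
    ext i j; exact hgsym j i
  have hGit : Gi.transpose * G = 1 := by
    have h := congrArg Matrix.transpose hGG
    rw [Matrix.transpose_mul, hGt, Matrix.transpose_one] at h
    exact h
  have hGisymM : Gi.transpose = Gi := by
    calc Gi.transpose = Gi.transpose * (G * Gi) := by rw [hGG, mul_one]
      _ = (Gi.transpose * G) * Gi := by rw [mul_assoc]
      _ = Gi := by rw [hGit, one_mul]
  have hGisym : ∀ i j, ginv i j = ginv j i := by
    intro i j
    have h := congrFun (congrFun hGisymM j) i
    simpa [hGidef, Matrix.transpose_apply] using h
  -- nondegeneracy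
  have hnd : ∀ w : Fin n → ℝ, (∀ l, ∑ j, w j * g j l = 0) → w = 0 := by
    intro w hw
    funext i
    have key : w i = ∑ l, (∑ j, w j * g j l) * ginv l i := by
      calc w i = ∑ j, w j * (if j = i then (1:ℝ) else 0) := by simp
        _ = ∑ j, w j * ∑ l, g j l * ginv l i := by
            refine Finset.sum_congr rfl fun j _ => ?_
            rw [hinv]
        _ = ∑ j, ∑ l, w j * (g j l * ginv l i) := by
            refine Finset.sum_congr rfl fun j _ => ?_
            rw [Finset.mul_sum]
        _ = ∑ l, ∑ j, w j * (g j l * ginv l i) := Finset.sum_comm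
        _ = ∑ l, (∑ j, w j * g j l) * ginv l i := by
            refine Finset.sum_congr rfl fun l _ => ?_
            rw [Finset.sum_mul]
            exact Finset.sum_congr rfl fun j _ => by ring
    simp only [Pi.zero_apply]
    simpa [hw] using key
  set V := ∑ j, ∑ k, ginv j k * v j * v k with hV
  set u : Fin n → ℝ := fun k => ∑ m, ginv k m * v m with hu_def
  have hu : ∀ l, ∑ k, u k * g k l = v l := by
    intro l
    calc ∑ k, u k * g k l = ∑ k, ∑ m, ginv k m * v m * g k l := by
          refine Finset.sum_congr rfl fun k _ => ?_
          simp only [hu_def]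
          rw [Finset.sum_mul]
      _ = ∑ m, ∑ k, ginv k m * v m * g k l := Finset.sum_comm
      _ = ∑ m, v m * ∑ k, ginv m k * g k l := by
          refine Finset.sum_congr rfl fun m _ => ?_
          rw [Finset.mul_sum]
          exact Finset.sum_congr rfl fun k _ => by rw [hGisym k m]; ring
      _ = ∑ m, v m * (if m = l then (1:ℝ) else 0) := by
          refine Finset.sum_congr rfl fun m _ => ?_
          rw [hGmul]
      _ = v l := by simp
  have hu2 : ∀ jj, ∑ k, u k * g jj k = v jj := by
    intro jj
    rw [← hu jj]
    exact Finset.sum_congr rfl fun k _ => by rw [hgsym]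
  have huv : ∑ k, u k * v k = V := by
    rw [hV]
    calc ∑ k, u k * v k = ∑ k, ∑ m, ginv k m * v m * v k := by
          refine Finset.sum_congr rfl fun k _ => ?_
          simp only [hu_def]
          rw [Finset.sum_mul]
      _ = ∑ j, ∑ k, ginv j k * v j * v k := by
          exact Finset.sum_congr rfl fun k _ => Finset.sum_congr rfl fun m _ => by ring
  -- a nonzero w with w·v = 0
  obtain ⟨j0, hj0⟩ : ∃ j, v j ≠ 0 := by
    by_contra h
    push_neg at h
    apply hv
    rw [hV]  -- might be no-op
    simp [h]
  have h0n : (0 : ℕ) < n := by omega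
  have h1n : (1 : ℕ) < n := by omega
  set i0 : Fin n := ⟨0, h0n⟩ with hi0
  set i1 : Fin n := ⟨1, h1n⟩ with hi1
  have hne : i0 ≠ i1 := by
    simp [hi0, hi1, Fin.ext_iff]
  obtain ⟨w, hw0, hwv⟩ : ∃ w : Fin n → ℝ, w ≠ 0 ∧ ∑ j, w j * v j = 0 := by
    by_cases h : v i0 = 0
    · refine ⟨(Pi.single i0 1 : Fin n → ℝ), ?_, ?_⟩
      · intro hc
        have := congrFun hc i0
        simp [Pi.single_apply] at this
      · have hterm : ∀ j, (Pi.single i0 1 : Fin n → ℝ) j * v j = if j = i0 then v j else 0 := by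
          intro j
          by_cases hj : j = i0 <;> simp [Pi.single_apply, hj]
        rw [Finset.sum_congr rfl fun j _ => hterm j]
        simp [h]
    · refine ⟨(Pi.single i0 (v i1) - Pi.single i1 (v i0) : Fin n → ℝ), ?_, ?_⟩
      · intro hc
        have hc1 := congrFun hc i1
        simp [Pi.single_apply, hne.symm] at hc1
        exact h hc1
      · have hterm : ∀ j, ((Pi.single i0 (v i1) - Pi.single i1 (v i0) : Fin n → ℝ)) j * v j
            = (if j = i0 then v i1 * v j else 0) - (if j = i1 then v i0 * v j else 0) := by
          intro j
          simp only [Pi.sub_apply, Pi.single_apply]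
          rcases eq_or_ne j i0 with hj | hj
          · subst hj
            simp [hne, Ne.symm hne]
          · rcases eq_or_ne j i1 with hj' | hj'
            · subst hj'
              simp [hj]
            · simp [hj, hj']
        rw [Finset.sum_congr rfl fun j _ => hterm j]
        rw [Finset.sum_sub_distrib]
        rw [Finset.sum_ite_eq' Finset.univ i0 (fun j => v i1 * v j)]
        rw [Finset.sum_ite_eq' Finset.univ i1 (fun j => v i0 * v j)]
        simp
        ring
  have hbzero : ∀ b : ℝ, (∀ l, b * ∑ j, w j * g j l = 0) → b = 0 := by
    intro b hb
    by_contra hbne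
    exact hw0 (hnd w fun l => (mul_eq_zero.mp (hb l)).resolve_left hbne)
  have hswap : ∀ l, ∑ j, w j * g l j = ∑ j, w j * g j l := by
    intro l
    exact Finset.sum_congr rfl fun j _ => by rw [hgsym]
  -- contractions
  set B := ∑ k, u k * β k with hBdef
  set C := ∑ l, u l * γ l with hCdef
  have stepA : ∀ j l, α j * v l + B * g l j + γ l * v j + δ j * (V * v l) = 0 := by
    intro j l
    have h0 : ∑ k, u k * (α j * g k l + β k * g l j + γ l * g j k + δ j * v k * v l) = 0 := by
      simp [heq]
    have h1' : ∑ k, u k * (α j * g k l + β k * g l j + γ l * g j k + δ j * v k * v l)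
        = α j * (∑ k, u k * g k l) + (∑ k, u k * β k) * g l j
          + γ l * (∑ k, u k * g j k) + δ j * ((∑ k, u k * v k) * v l) := by
      simp only [Finset.mul_sum, Finset.sum_mul, ← Finset.sum_add_distrib]
      exact Finset.sum_congr rfl fun k _ => by ring
    rw [h1', hu l, hu2 j, huv, ← hBdef] at h0
    exact h0
  have stepA' : ∀ j k, α j * v k + β k * v j + C * g j k + δ j * (v k * V) = 0 := by
    intro j k
    have h0 : ∑ l, u l * (α j * g k l + β k * g l j + γ l * g j k + δ j * v k * v l) = 0 := by
      simp [heq]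
    have h1' : ∑ l, u l * (α j * g k l + β k * g l j + γ l * g j k + δ j * v k * v l)
        = α j * (∑ l, u l * g k l) + β k * (∑ l, u l * g l j)
          + (∑ l, u l * γ l) * g j k + δ j * (v k * (∑ l, u l * v l)) := by
      simp only [Finset.mul_sum, Finset.sum_mul, ← Finset.sum_add_distrib]
      exact Finset.sum_congr rfl fun l _ => by ring
    rw [h1', hu2 k, hu j, huv, ← hCdef] at h0
    exact h0
  have hB2 : ∀ j, α j * V + B * v j + C * v j + δ j * (V * V) = 0 := by
    intro j
    have h0 : ∑ l, u l * (α j * v l + B * g l j + γ l * v j + δ j * (V * v l)) = 0 := by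
      simp [stepA]
    have h1' : ∑ l, u l * (α j * v l + B * g l j + γ l * v j + δ j * (V * v l))
        = α j * (∑ l, u l * v l) + B * (∑ l, u l * g l j)
          + (∑ l, u l * γ l) * v j + δ j * (V * (∑ l, u l * v l)) := by
      simp only [Finset.mul_sum, Finset.sum_mul, ← Finset.sum_add_distrib]
      exact Finset.sum_congr rfl fun l _ => by ring
    rw [h1', huv, hu j, ← hCdef] at h0
    exact h0
  set t : ℝ := (-(B + C)) / V with htdef
  have htV : t * V = -(B + C) := by
    rw [htdef]
    field_simp
  have hAt : ∀ j, α j = t * v j - V * δ j := by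
    intro j
    have h := hB2 j
    have h2 : (α j - (t * v j - V * δ j)) * V = 0 := by
      linear_combination h - v j * htV
    rcases mul_eq_zero.mp h2 with h' | h'
    · linarith
    · exact absurd h' hv
  have eq5 : ∀ j l, t * (v j * v l) + B * g l j + γ l * v j = 0 := by
    intro j l
    linear_combination stepA j l - v l * hAt j
  have eq5' : ∀ j k, t * (v j * v k) + β k * v j + C * g j k = 0 := by
    intro j k
    linear_combination stepA' j k - v k * hAt j
  have hB0 : B = 0 := by
    apply hbzero
    intro l
    have h0 : ∑ j, w j * (t * (v j * v l) + B * g l j + γ l * v j) = 0 := by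
      simp [eq5]
    have h1' : ∑ j, w j * (t * (v j * v l) + B * g l j + γ l * v j)
        = t * ((∑ j, w j * v j) * v l) + B * (∑ j, w j * g l j)
          + γ l * (∑ j, w j * v j) := by
      simp only [Finset.mul_sum, Finset.sum_mul, ← Finset.sum_add_distrib]
      exact Finset.sum_congr rfl fun j _ => by ring
    rw [h1', hwv, hswap l] at h0
    simpa using h0
  have hC0 : C = 0 := by
    apply hbzero
    intro k
    have h0 : ∑ j, w j * (t * (v j * v k) + β k * v j + C * g j k) = 0 := by
      simp [eq5']
    have h1' : ∑ j, w j * (t * (v j * v k) + β k * v j + C * g j k)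
        = t * ((∑ j, w j * v j) * v k) + β k * (∑ j, w j * v j)
          + C * (∑ j, w j * g j k) := by
      simp only [Finset.mul_sum, Finset.sum_mul, ← Finset.sum_add_distrib]
      exact Finset.sum_congr rfl fun j _ => by ring
    rw [h1', hwv] at h0
    simpa using h0
  have ht0 : t = 0 := by
    rw [htdef, hB0, hC0]
    simp
  have hγ : γ = 0 := by
    funext l
    have h := eq5 j0 l
    rw [ht0, hB0] at h
    simp only [Pi.zero_apply]
    have h2 : γ l * v j0 = 0 := by linarith
    exact (mul_eq_zero.mp h2).resolve_right hj0
  have hβ : β = 0 := by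
    funext k
    have h := eq5' j0 k
    rw [ht0, hC0] at h
    simp only [Pi.zero_apply]
    have h2 : β k * v j0 = 0 := by linarith
    exact (mul_eq_zero.mp h2).resolve_right hj0
  have hδ : δ = 0 := by
    funext j
    simp only [Pi.zero_apply]
    by_contra hj
    have hVg : ∀ k l, V * g k l = v k * v l := by
      intro k l
      have h := heq j k l
      have hb : β k = 0 := by rw [hβ]; rfl
      have hg : γ l = 0 := by rw [hγ]; rfl
      have ha := hAt j
      rw [ht0] at ha
      have hprod : δ j * (v k * v l - V * g k l) = 0 := by
        linear_combination h - g k l * ha - g l j * hb - g j k * hg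
      rcases mul_eq_zero.mp hprod with h' | h'
      · exact absurd h' hj
      · linarith
    have hcon : ∀ l, V * ∑ k, w k * g k l = 0 := by
      intro l
      calc V * ∑ k, w k * g k l = ∑ k, w k * (V * g k l) := by
            rw [Finset.mul_sum]
            exact Finset.sum_congr rfl fun k _ => by ring
        _ = ∑ k, w k * (v k * v l) := Finset.sum_congr rfl fun k _ => by rw [hVg]
        _ = (∑ k, w k * v k) * v l := by
            rw [Finset.sum_mul]
            exact Finset.sum_congr rfl fun k _ => by ring
        _ = 0 := by rw [hwv]; ring
    exact hv (hbzero V hcon)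
  have hα : α = 0 := by
    funext j
    have h := hAt j
    rw [ht0, hδ] at h
    simpa using h
  exact ⟨hα, hβ, hγ, hδ⟩
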